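/- For every integer M ≥ 0, the probabilists' Hermite polynomial He_M has exactly M real roots, all of them simple (i.e. He_M has M distinct real zeros and its degree is M). -/

import Mathlib

open Polynomial Filter

/-- Probabilists' Hermite polynomials: He₀ = 1, He₁ = x,
    He_{n+1} = x·He_n − n·He_{n−1}. -/

noncomputable def He : ℕ → Polynomial ℝ
  | 0 => 1
  | 1 => Polynomial.X
  | (n + 2) => Polynomial.X * He (n + 1) - Polynomial.C ((n : ℝ) + 1) * He n

lemma He_succ_succ (n : ℕ) :
    He (n + 2) = X * He (n + 1) - C ((n : ℝ) + 1) * He n := rfl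

lemma He_monic_natDegree : ∀ n : ℕ, (He n).Monic ∧ (He n).natDegree = n
  | 0 => ⟨monic_one, natDegree_one⟩
  | 1 => ⟨monic_X, natDegree_X⟩
  | (n + 2) => by
    obtain ⟨h1m, h1d⟩ := He_monic_natDegree (n + 1)
    obtain ⟨h0m, h0d⟩ := He_monic_natDegree n
    have hXm : (X * He (n+1)).Monic := monic_X.mul h1m
    have hXd : (X * He (n+1)).natDegree = n + 2 := by
      rw [natDegree_mul X_ne_zero h1m.ne_zero, natDegree_X, h1d]; omega
    have hq : (C ((n:ℝ)+1) * He n).degree < (X * He (n+1)).degree := by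
      have h2 : (X * He (n+1)).degree = ((n+2 : ℕ) : WithBot ℕ) := by
        rw [degree_eq_natDegree hXm.ne_zero, hXd]
      rw [h2]
      calc (C ((n:ℝ)+1) * He n).degree ≤ 0 + (He n).degree :=
            le_trans (degree_mul_le _ _) (add_le_add degree_C_le le_rfl)
        _ = (He n).degree := zero_add _
        _ = ((n:ℕ) : WithBot ℕ) := by rw [degree_eq_natDegree h0m.ne_zero, h0d]
        _ < ((n+2 : ℕ) : WithBot ℕ) := by exact_mod_cast (by omega : n < n + 2)
    constructor
    · rw [He_succ_succ]; exact hXm.sub_of_left hq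
    · rw [He_succ_succ, natDegree_eq_of_degree_eq (degree_sub_eq_left_of_degree_lt hq), hXd]

lemma filter_not_lt_card (n i : ℕ) :
    ((Finset.range n).filter fun j => ¬ j < i).card = n - i := by
  have h : ((Finset.range n).filter fun j => ¬ j < i) = Finset.Ico i n := by
    ext j; simp [Finset.mem_Ico, Nat.not_lt]; omega
  rw [h, Nat.card_Ico]

lemma sign_prod (n i : ℕ) (x : ℕ → ℝ) (y : ℝ)
    (hlt : ∀ j, j < i → x j < y) (hgt : ∀ j, i ≤ j → j < n → y < x j) :
    0 < (-1:ℝ)^(n - i) * ∏ j ∈ Finset.range n, (y - x j) := by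
  rw [← Finset.prod_filter_mul_prod_filter_not (Finset.range n) (fun j => j < i)]
  have h1 : 0 < ∏ j ∈ (Finset.range n).filter (fun j => j < i), (y - x j) :=
    Finset.prod_pos fun j hj => by
      rw [Finset.mem_filter] at hj; linarith [hlt j hj.2]
  have h3 : 0 < ∏ j ∈ (Finset.range n).filter (fun j => ¬ j < i), (x j - y) :=
    Finset.prod_pos fun j hj => by
      rw [Finset.mem_filter, Finset.mem_range] at hj
      linarith [hgt j (Nat.not_lt.1 hj.2) hj.1]
  have h2 : ∏ j ∈ (Finset.range n).filter (fun j => ¬ j < i), (y - x j)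
      = (-1:ℝ)^(n-i) * ∏ j ∈ (Finset.range n).filter (fun j => ¬ j < i), (x j - y) := by
    rw [← filter_not_lt_card n i, ← Finset.prod_const, ← Finset.prod_mul_distrib]
    exact Finset.prod_congr rfl fun j _ => by ring
  rw [h2]
  have key : (-1:ℝ)^(n-i) * ((-1:ℝ)^(n-i)) = 1 := by
    rw [← pow_add]; exact Even.neg_one_pow ⟨n-i, by ring⟩
  have heq : (-1:ℝ)^(n-i) *
      ((∏ j ∈ (Finset.range n).filter (fun j => j < i), (y - x j)) *
        ((-1:ℝ)^(n-i) * ∏ j ∈ (Finset.range n).filter (fun j => ¬ j < i), (x j - y)))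
      = ((-1:ℝ)^(n-i) * ((-1:ℝ)^(n-i))) *
        ((∏ j ∈ (Finset.range n).filter (fun j => j < i), (y - x j)) *
          ∏ j ∈ (Finset.range n).filter (fun j => ¬ j < i), (x j - y)) := by ring
  rw [heq, key, one_mul]
  exact mul_pos h1 h3

lemma poly_root_between (p : ℝ[X]) {a b : ℝ} (hab : a < b)
    (h : p.eval a * p.eval b < 0) : ∃ z, a < z ∧ z < b ∧ p.eval z = 0 := by
  have hc : ContinuousOn (fun t => p.eval t) (Set.Icc a b) := p.continuous.continuousOn
  rcases mul_neg_iff.1 h with ⟨hpa, hpb⟩ | ⟨hpa, hpb⟩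
  · obtain ⟨z, hz, hz0⟩ := intermediate_value_Ioo' hab.le hc ⟨hpb, hpa⟩
    exact ⟨z, hz.1, hz.2, hz0⟩
  · obtain ⟨z, hz, hz0⟩ := intermediate_value_Ioo hab.le hc ⟨hpa, hpb⟩
    exact ⟨z, hz.1, hz.2, hz0⟩

lemma He_roots_eq (n : ℕ) (x : ℕ → ℝ)
    (hmono : ∀ i j, i < j → j < n → x i < x j)
    (hroot : ∀ i, i < n → (He n).eval (x i) = 0) :
    (He n).roots = (Finset.range n).val.map x := by
  obtain ⟨hm, hd⟩ := He_monic_natDegree n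
  set m : Multiset ℝ := (Finset.range n).val.map x with hmdef
  have hnd : m.Nodup := by
    refine Multiset.Nodup.map_on ?_ (Finset.range n).nodup
    intro i hi j hj hij
    rw [Finset.mem_val, Finset.mem_range] at hi hj
    by_contra hne
    rcases Nat.lt_or_ge i j with h | h
    · exact absurd hij (ne_of_lt (hmono i j h hj))
    · have h' : j < i := by omega
      exact absurd hij.symm (ne_of_lt (hmono j i h' hi))
  have hsub : m ≤ (He n).roots := by
    rw [Multiset.le_iff_subset hnd]
    intro r hr
    obtain ⟨i, hi, rfl⟩ := Multiset.mem_map.1 hr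
    rw [Finset.mem_val, Finset.mem_range] at hi
    rw [mem_roots hm.ne_zero]
    exact hroot i hi
  have hcardm : Multiset.card m = n := by simp [hmdef]
  exact (Multiset.eq_of_le_of_card_le hsub
    (le_trans (card_roots' (He n)) (le_of_eq (by rw [hd, hcardm])))).symm

lemma He_prod (n : ℕ) (x : ℕ → ℝ)
    (hmono : ∀ i j, i < j → j < n → x i < x j)
    (hroot : ∀ i, i < n → (He n).eval (x i) = 0) :
    He n = ∏ j ∈ Finset.range n, (X - C (x j)) := by
  obtain ⟨hm, hd⟩ := He_monic_natDegree n
  have hre := He_roots_eq n x hmono hroot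
  have hcard : Multiset.card (He n).roots = n := by rw [hre]; simp
  have h := prod_multiset_X_sub_C_of_monic_of_roots_card_eq hm (by rw [hcard, hd])
  rw [← h, hre, Multiset.map_map, Finset.prod_eq_multiset_prod]
  rfl

lemma He_eventually_pos (n : ℕ) : ∀ᶠ b in atTop, 0 < (He (n+1)).eval b := by
  obtain ⟨hm, hd⟩ := He_monic_natDegree (n+1)
  have ht : Tendsto (fun t => (He (n+1)).eval t) atTop atTop := by
    apply Polynomial.tendsto_atTop_of_leadingCoeff_nonneg
    · rw [degree_eq_natDegree hm.ne_zero, hd]; exact_mod_cast Nat.succ_pos n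
    · rw [hm.leadingCoeff]; norm_num
  exact ht.eventually_gt_atTop 0

lemma He_eventually_neg (n : ℕ) :
    ∀ᶠ t in atTop, 0 < (-1:ℝ)^(n+1) * (He (n+1)).eval (-t) := by
  obtain ⟨hm, hd⟩ := He_monic_natDegree (n+1)
  set q : ℝ[X] := C ((-1:ℝ)^(n+1)) * (He (n+1)).comp (-X) with hq
  have hXd : (-X : ℝ[X]).natDegree = 1 := by simp
  have hqe : ∀ t, q.eval t = (-1:ℝ)^(n+1) * (He (n+1)).eval (-t) := by
    intro t; simp [hq, eval_comp]
  have hclc : ((He (n+1)).comp (-X)).leadingCoeff = (-1:ℝ)^(n+1) := by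
    rw [leadingCoeff_comp (by rw [hXd]; norm_num), hm.leadingCoeff, hd]
    simp
  have hcne : (He (n+1)).comp (-X) ≠ 0 := by
    intro h
    rw [h] at hclc
    simp at hclc
    exact (pow_ne_zero (n+1) (by norm_num : (-1:ℝ) ≠ 0)) hclc.symm
  have hqlc : q.leadingCoeff = 1 := by
    rw [hq, leadingCoeff_mul, leadingCoeff_C, hclc, ← pow_add]
    exact Even.neg_one_pow ⟨n+1, by ring⟩
  have hqd : 0 < q.degree := by
    rw [hq, degree_mul, degree_C (by positivity : ((-1:ℝ)^(n+1)) ≠ 0), zero_add,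
      degree_eq_natDegree hcne, natDegree_comp, hd, hXd]
    exact_mod_cast (by omega : 0 < (n+1)*1)
  have ht : Tendsto (fun t => q.eval t) atTop atTop :=
    Polynomial.tendsto_atTop_of_leadingCoeff_nonneg _ hqd (by rw [hqlc]; norm_num)
  filter_upwards [ht.eventually_gt_atTop 0] with t h
  rw [hqe t] at h; exact h

lemma He_key (n : ℕ) : ∃ x : ℕ → ℝ,
    (∀ i j, i < j → j < n → x i < x j) ∧
    (∀ i, i < n → (He n).eval (x i) = 0) ∧
    (∀ i, i < n → 0 < (-1:ℝ)^(n - i) * (He (n+1)).eval (x i)) := by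
  induction n with
  | zero =>
    exact ⟨fun _ => 0, fun i j _ h => absurd h (by omega), fun i h => absurd h (by omega), fun i h => absurd h (by omega)⟩
  | succ n ih =>
    obtain ⟨x, hmono, hroot, hsign⟩ := ih
    -- choose a
    have hax' : ∀ᶠ t in atTop, ∀ i ∈ Finset.range n, -t < x i := by
      rw [Filter.eventually_all_finset]
      intro i _
      filter_upwards [eventually_gt_atTop (-(x i))] with t ht
      linarith
    obtain ⟨t, hta, htx⟩ := ((He_eventually_neg n).and hax').exists
    set a : ℝ := -t with hadef
    have hasign : 0 < (-1:ℝ)^(n+1) * (He (n+1)).eval a := hta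
    have hax : ∀ i, i < n → a < x i := fun i hi => htx i (Finset.mem_range.2 hi)
    -- choose b
    have hbx' : ∀ᶠ s in atTop, ∀ i ∈ Finset.range n, x i < s := by
      rw [Filter.eventually_all_finset]
      intro i _
      exact eventually_gt_atTop (x i)
    obtain ⟨b, ⟨hbpos, hbx'⟩, hab⟩ :=
      (((He_eventually_pos n).and hbx').and (eventually_gt_atTop a)).exists
    have hbx : ∀ i, i < n → x i < b := fun i hi => hbx' i (Finset.mem_range.2 hi)
    -- nodes
    set s : ℕ → ℝ := fun k => if k = 0 then a else if k ≤ n then x (k-1) else b with hs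
    have hs0 : s 0 = a := by simp [hs]
    have hsx : ∀ k, 1 ≤ k → k ≤ n → s k = x (k-1) := by
      intro k h1 h2
      simp only [hs]
      rw [if_neg (by omega), if_pos h2]
    have hsb : s (n+1) = b := by
      simp only [hs]
      rw [if_neg (by omega), if_neg (by omega)]
    have hsmono : ∀ k l, k < l → l ≤ n+1 → s k < s l := by
      intro k l hkl hl
      rcases Nat.eq_zero_or_pos k with rfl | hk
      · by_cases hl2 : l ≤ n
        · rw [hs0, hsx l (by omega) hl2]; exact hax (l-1) (by omega)
        · have hl3 : l = n+1 := by omega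
          rw [hs0, hl3, hsb]; exact hab
      · by_cases hl2 : l ≤ n
        · rw [hsx k hk (by omega), hsx l (by omega) hl2]
          exact hmono (k-1) (l-1) (by omega) (by omega)
        · have hl3 : l = n+1 := by omega
          rw [hl3, hsb, hsx k hk (by omega)]
          exact hbx (k-1) (by omega)
    have hsign' : ∀ k, k ≤ n+1 → 0 < (-1:ℝ)^(n+1-k) * (He (n+1)).eval (s k) := by
      intro k hk
      rcases Nat.eq_zero_or_pos k with rfl | hk1
      · rw [hs0]; simpa using hasign
      · by_cases hk2 : k ≤ n
        · rw [hsx k hk1 hk2, (by omega : n+1-k = n-(k-1))]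
          exact hsign (k-1) (by omega)
        · have hk3 : k = n+1 := by omega
          subst hk3
          rw [hsb]; simpa using hbpos
    -- roots of He (n+1)
    have hz : ∀ k, ∃ z, k < n+1 → (s k < z ∧ z < s (k+1) ∧ (He (n+1)).eval z = 0) := by
      intro k
      by_cases hk : k < n+1
      · have h1 := hsign' k (by omega)
        have h2 := hsign' (k+1) (by omega)
        have hodd : (-1:ℝ)^(n+1-k) * (-1:ℝ)^(n+1-(k+1)) = -1 := by
          rw [← pow_add]; exact Odd.neg_one_pow ⟨n - k, by omega⟩
        have hmul : (He (n+1)).eval (s k) * (He (n+1)).eval (s (k+1)) < 0 := by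
          have hpp := mul_pos h1 h2
          have heq : ((-1:ℝ)^(n+1-k) * (He (n+1)).eval (s k)) *
              ((-1:ℝ)^(n+1-(k+1)) * (He (n+1)).eval (s (k+1)))
              = ((-1:ℝ)^(n+1-k) * (-1:ℝ)^(n+1-(k+1))) *
                ((He (n+1)).eval (s k) * (He (n+1)).eval (s (k+1))) := by ring
          rw [heq, hodd] at hpp
          linarith
        obtain ⟨z, hz1, hz2, hz3⟩ :=
          poly_root_between (He (n+1)) (hsmono k (k+1) (by omega) (by omega)) hmul
        exact ⟨z, fun _ => ⟨hz1, hz2, hz3⟩⟩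
      · exact ⟨0, fun h => absurd h hk⟩
    choose y hy using hz
    refine ⟨y, ?_, ?_, ?_⟩
    · intro i j hij hj
      obtain ⟨hi1, hi2, _⟩ := hy i (by omega)
      obtain ⟨hj1, hj2, _⟩ := hy j hj
      have hle : s (i+1) ≤ s j := by
        rcases Nat.lt_or_ge (i+1) j with h | h
        · exact le_of_lt (hsmono (i+1) j h (by omega))
        · have : i + 1 = j := by omega
          rw [this]
      linarith
    · intro i hi; exact (hy i hi).2.2
    · intro i hi
      obtain ⟨hi1, hi2, hi3⟩ := hy i hi
      have heval : (He (n+1+1)).eval (y i) = -(((n:ℝ)+1) * (He n).eval (y i)) := by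
        rw [He_succ_succ]
        simp [hi3]
      have hpp : 0 < (-1:ℝ)^(n - i) * (He n).eval (y i) := by
        rw [He_prod n x hmono hroot, eval_prod]
        simp only [eval_sub, eval_X, eval_C]
        apply sign_prod n i x (y i)
        · intro j hj
          have hxe : s (j+1) = x j := hsx (j+1) (by omega) (by omega)
          have h1 : s (j+1) ≤ s i := by
            rcases Nat.lt_or_ge (j+1) i with h | h
            · exact le_of_lt (hsmono (j+1) i h (by omega))
            · have he : j+1 = i := by omega
              rw [he]
          rw [hxe] at h1
          linarith
        · intro j hij hjn
          have hxe : s (j+1) = x j := hsx (j+1) (by omega) (by omega)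
          have h1 : s (i+1) ≤ s (j+1) := by
            rcases Nat.lt_or_ge (i+1) (j+1) with h | h
            · exact le_of_lt (hsmono (i+1) (j+1) h (by omega))
            · have he : i+1 = j+1 := by omega
              rw [he]
          rw [hxe] at h1
          linarith
      rw [(by omega : n+1-i = (n-i)+1), pow_succ, heval]
      have hn1 : (0:ℝ) < (n:ℝ)+1 := by positivity
      have heq : ((-1:ℝ)^(n-i) * -1) * (-(((n:ℝ)+1) * (He n).eval (y i)))
          = ((n:ℝ)+1) * ((-1:ℝ)^(n-i) * (He n).eval (y i)) := by ring
      rw [heq]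
      exact mul_pos hn1 hpp

/-- He_M has degree M and exactly M real roots, all simple: its multiset of
    real roots has cardinality M and no duplicates. -/
theorem hermite_real_simple_roots (M : ℕ) :
    (He M).natDegree = M ∧
    Multiset.card (He M).roots = M ∧
    (He M).roots.Nodup := by
  obtain ⟨hm, hd⟩ := He_monic_natDegree M
  obtain ⟨x, hmono, hroot, -⟩ := He_key M
  have hre := He_roots_eq M x hmono hroot
  refine ⟨hd, ?_, ?_⟩
  · rw [hre]; simp
  · rw [hre]
    refine Multiset.Nodup.map_on ?_ (Finset.range M).nodup
    intro i hi j hj hij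
    rw [Finset.mem_val, Finset.mem_range] at hi hj
    by_contra hne
    rcases Nat.lt_or_ge i j with h | h
    · exact absurd hij (ne_of_lt (hmono i j h hj))
    · exact absurd hij.symm (ne_of_lt (hmono j i (by omega) hi))
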